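/- arXiv:2205.02009 — 4 statements merged into one kernel-verified Lean document; each statement's English description precedes it below -/
import Mathlib

section
/- After pivoting about an edge (u,v) of G, for a vertex pair (a,b) with a ∈ N_G(u)\({v} ∪ N_G(v)) and b ∈ N_G(v)\({u} ∪ N_G(u)), a and b are adjacent in G ∧ uv if and only if they are non-adjacent in G. -/
/-- Local complementation of `G` about `u`: toggles the edge between each pair of
distinct neighbours of `u`. -/
def localComp {V : Type*} (G : SimpleGraph V) (u : V) : SimpleGraph V where
  Adj b c := b ≠ c ∧ ((G.Adj u b ∧ G.Adj u c) ↔ ¬ G.Adj b c)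
  symm := by
    constructor
    intro b c ⟨hne, hiff⟩
    refine ⟨hne.symm, ?_⟩
    rw [and_comm, G.adj_comm c b]
    exact hiff
  loopless := by
    constructor
    intro b h
    exact h.1 rfl

/-- Pivot of `G` about the edge `(u,v)`. -/
def pivot {V : Type*} (G : SimpleGraph V) (u v : V) : SimpleGraph V :=
  localComp (localComp (localComp G u) v) u

theorem pivot_toggles_cross_edges {V : Type*} (G : SimpleGraph V) (u v a b : V)
    (huv : G.Adj u v)
    (ha : a ∈ G.neighborSet u \ ({v} ∪ G.neighborSet v))
    (hb : b ∈ G.neighborSet v \ ({u} ∪ G.neighborSet u)) :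
    (pivot G u v).Adj a b ↔ ¬ G.Adj a b := by
  obtain ⟨hua, hav⟩ := ha
  obtain ⟨hvb, hbu⟩ := hb
  simp only [Set.mem_union, Set.mem_singleton_iff, SimpleGraph.mem_neighborSet,
    not_or] at hua hav hvb hbu
  obtain ⟨hav1, hav2⟩ := hav
  obtain ⟨hbu1, hbu2⟩ := hbu
  have hau : a ≠ u := fun h => G.loopless.irrefl u (h ▸ hua)
  have hbv : b ≠ v := fun h => G.loopless.irrefl v (h ▸ hvb)
  have hab : a ≠ b := fun h => hbu2 (h ▸ hua)
  have huv' : u ≠ v := G.ne_of_adj huv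
  simp only [pivot, localComp, SimpleGraph.adj_comm]
  constructor
  · rintro ⟨-, h⟩
    simp_all [SimpleGraph.adj_comm]
    tauto
  · intro hnab
    refine ⟨hab, ?_⟩
    simp_all [SimpleGraph.adj_comm]
    tauto
end

section
/- Let A ⊆ 𝔽₂ⁿ be a nonempty affine subspace with set of free variables F, and let ψ = Σ_{x∈A} i^{l(x)} (−1)^{q(x)} |x⟩ where l is a linear form and q a quadratic form (both mod 2, possibly depending on all n variables). Then there exist a linear form l′, a quadratic form q′ depending only on the coordinates indexed by F, and a nonzero scalar λ ∈ ℂ, such that ψ = λ Σ_{x∈A} i^{l′(x)} (−1)^{q′(x)} |x⟩. -/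
/-- `A` is a (nonempty) affine subspace of `𝔽₂ⁿ`: a coset of a linear subspace. -/
def IsAffineSubspace {n : ℕ} (A : Set (Fin n → ZMod 2)) : Prop :=
  ∃ (W : Submodule (ZMod 2) (Fin n → ZMod 2)) (x₀ : Fin n → ZMod 2),
    A = (fun w => x₀ + w) '' (W : Set (Fin n → ZMod 2))

/-- `F` is a set of free variables for `A`: the projection onto the coordinates
indexed by `F`, restricted to `A`, is a bijection onto `𝔽₂^F`. -/
def IsFreeSet {n : ℕ} (A : Set (Fin n → ZMod 2)) (F : Finset (Fin n)) : Prop :=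
  Set.BijOn (fun x (j : {k // k ∈ F}) => x j.1) A Set.univ

/-- Triangularity: every dependent variable `x_j` (`j ∉ F`) is, on `A`, an affine
function of free variables of strictly smaller index. -/
def DependsOnlyBelow {n : ℕ} (A : Set (Fin n → ZMod 2)) (F : Finset (Fin n)) : Prop :=
  ∀ j ∉ F, ∃ (a : ZMod 2) (b : Fin n → ZMod 2),
    (∀ k, b k ≠ 0 → k ∈ F ∧ k < j) ∧ ∀ x ∈ A, x j = a + ∑ k, b k * x k

open Complex

/-! ### Auxiliary lemmas -/

private lemma zmod2_cases' : ∀ u : ZMod 2, u = 0 ∨ u = 1 := by decide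
private lemma zmod2_add_add : ∀ u v : ZMod 2, (u + v) + u = v := by decide
private lemma zmod2_add_add' : ∀ u v : ZMod 2, (u + v) + v = u := by decide
private lemma zmod2_mul_self : ∀ u : ZMod 2, u * u = u := by decide

private lemma I_val_add (u v : ZMod 2) :
    (I:ℂ) ^ ((u+v).val) = I ^ u.val * I ^ v.val * (-1:ℂ) ^ ((u*v).val) := by
  rcases zmod2_cases' u with hu | hu <;> rcases zmod2_cases' v with hv | hv <;>
    subst hu <;> subst hv <;>
    norm_num [Complex.I_mul_I, show ((0:ZMod 2)).val = 0 by decide,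
      show ((1:ZMod 2)).val = 1 by decide, show ((2:ZMod 2)).val = 0 by decide]

private lemma neg_one_val_add (u v : ZMod 2) :
    ((-1:ℂ)) ^ ((u+v).val) = (-1:ℂ) ^ u.val * (-1:ℂ) ^ v.val := by
  rcases zmod2_cases' u with hu | hu <;> rcases zmod2_cases' v with hv | hv <;>
    subst hu <;> subst hv <;>
    norm_num [show ((0:ZMod 2)).val = 0 by decide,
      show ((1:ZMod 2)).val = 1 by decide, show ((2:ZMod 2)).val = 0 by decide]

/-- On an affine subspace with free set `F`, every coordinate is an affine function
of the coordinates indexed by `F`. -/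
private lemma coord_affine {n : ℕ} {A : Set (Fin n → ZMod 2)} {F : Finset (Fin n)}
    (hA : IsAffineSubspace A) (hF : IsFreeSet A F) (j : Fin n) :
    ∃ (a : ZMod 2) (b : Fin n → ZMod 2), (∀ k, b k ≠ 0 → k ∈ F) ∧
      ∀ y ∈ A, y j = a + ∑ k, b k * y k := by
  classical
  obtain ⟨W, x₀, hW⟩ := hA
  set π : (Fin n → ZMod 2) →ₗ[ZMod 2] ({k // k ∈ F} → ZMod 2) :=
    LinearMap.funLeft (ZMod 2) (ZMod 2) (fun k => k.1) with hπ
  have hπ_apply : ∀ x (k : {k // k ∈ F}), π x k = x k.1 := fun x k => rfl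
  set ρ : W →ₗ[ZMod 2] ({k // k ∈ F} → ZMod 2) := π.comp W.subtype with hρ
  have hmemA : ∀ w : W, x₀ + (w : Fin n → ZMod 2) ∈ A := by
    intro w; rw [hW]; exact ⟨w, w.2, rfl⟩
  have hbij : Function.Bijective ρ := by
    constructor
    · intro w₁ w₂ h
      have h' : (fun (k : {k // k ∈ F}) => (x₀ + (w₁:Fin n → ZMod 2)) k.1)
          = (fun (k : {k // k ∈ F}) => (x₀ + (w₂:Fin n → ZMod 2)) k.1) := by
        funext k
        have := congrFun h k
        simp only [hρ, LinearMap.comp_apply, Submodule.subtype_apply, hπ_apply] at this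
        simp [Pi.add_apply, this]
      have h2 := hF.injOn (hmemA w₁) (hmemA w₂) h'
      have h3 : (w₁ : Fin n → ZMod 2) = w₂ := by
        funext k; have := congrFun h2 k; simpa using this
      exact Subtype.ext h3
    · intro z
      obtain ⟨y, hyA, hy⟩ := hF.surjOn (Set.mem_univ (fun (k : {k // k ∈ F}) => z k + x₀ k.1))
      rw [hW] at hyA
      obtain ⟨w, hwW, rfl⟩ := hyA
      refine ⟨⟨w, hwW⟩, ?_⟩
      funext k
      have h1 : x₀ k.1 + w k.1 = z k + x₀ k.1 := congrFun hy k
      have h1' : x₀ k.1 + w k.1 = x₀ k.1 + z k := h1.trans (add_comm _ _)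
      simp only [hρ, LinearMap.comp_apply, Submodule.subtype_apply, hπ_apply]
      exact add_left_cancel h1'
  set eqv := LinearEquiv.ofBijective ρ hbij with heqv
  set φ : ({k // k ∈ F} → ZMod 2) →ₗ[ZMod 2] ZMod 2 :=
    (LinearMap.proj j).comp (W.subtype.comp eqv.symm.toLinearMap) with hφ
  set b' : {k // k ∈ F} → ZMod 2 := fun k => φ (Pi.single k 1) with hb'
  have hkey : ∀ z, φ z = ∑ k, b' k * z k := by
    intro z
    have hz : z = ∑ k, Pi.single k (z k) := (Finset.univ_sum_single z).symm
    conv_lhs => rw [hz]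
    rw [map_sum]
    refine Finset.sum_congr rfl fun k _ => ?_
    rcases zmod2_cases' (z k) with h | h <;> rw [h]
    · simp
    · rw [mul_one]
  refine ⟨x₀ j + φ (π x₀), fun k => if h : k ∈ F then b' ⟨k, h⟩ else 0, ?_, ?_⟩
  · intro k hk
    by_contra hkF
    simp [dif_neg hkF] at hk
  · intro y hyA
    rw [hW] at hyA
    obtain ⟨w, hwW, rfl⟩ := hyA
    have hwj : w j = φ (π w) := by
      have h4 : eqv.symm (π w) = ⟨w, hwW⟩ := eqv.symm_apply_apply ⟨w, hwW⟩
      simp only [hφ, LinearMap.comp_apply, Submodule.subtype_apply,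
        LinearEquiv.coe_coe, h4, LinearMap.proj_apply]
    have hπw : π w = π (x₀ + w) + π x₀ := by
      funext k
      simp only [Pi.add_apply, hπ_apply]
      exact (zmod2_add_add (x₀ k.1) (w k.1)).symm
    have hsum : ∀ y : Fin n → ZMod 2,
        ∑ k, (if h : k ∈ F then b' ⟨k, h⟩ else 0) * y k = φ (π y) := by
      intro y
      rw [hkey (π y)]
      have e1 : ∑ k, (if h : k ∈ F then b' ⟨k, h⟩ else 0) * y k
          = ∑ k ∈ F, (if h : k ∈ F then b' ⟨k, h⟩ else 0) * y k :=
        (Finset.sum_subset (Finset.subset_univ F)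
          (fun k _ hk => by simp [dif_neg hk])).symm
      rw [e1, Finset.sum_subtype F (fun x => Iff.rfl)
        (fun k => (if h : k ∈ F then b' ⟨k, h⟩ else 0) * y k)]
      refine Finset.sum_congr rfl fun k _ => ?_
      rw [dif_pos k.2]
      rfl
    have h6 : φ (π (x₀ + w)) = φ (π w) + φ (π x₀) := by
      rw [map_add, map_add, add_comm]
    show (x₀ + w) j = x₀ j + φ (π x₀) + ∑ k, (if h : k ∈ F then b' ⟨k, h⟩ else 0) * (x₀ + w) k
    rw [hsum (x₀ + w), h6, ← hwj]
    show x₀ j + w j = x₀ j + φ (π x₀) + (w j + φ (π x₀))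
    have h7 : ∀ p q r : ZMod 2, p + q + (r + q) = p + r := by decide
    rw [h7]

/-! ### Canonical representation of quadratic functions supported on `F` -/

private def Qv {n : ℕ} (c : Fin n → Fin n → ZMod 2) (c₀ : Fin n → ZMod 2)
    (y : Fin n → ZMod 2) : ZMod 2 :=
  (∑ j, ∑ k ∈ Finset.univ.filter (fun k => j < k), c j k * y j * y k) + ∑ j, c₀ j * y j

private def RepQ {n : ℕ} (F : Finset (Fin n)) (g : (Fin n → ZMod 2) → ZMod 2) : Prop :=
  ∃ c c₀ γ, (∀ j k, c j k ≠ 0 → j ∈ F ∧ k ∈ F) ∧ (∀ j, c₀ j ≠ 0 → j ∈ F) ∧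
    ∀ y, g y = Qv c c₀ y + γ

section RepQLemmas
variable {n : ℕ} {F : Finset (Fin n)}

private lemma RepQ_congr' {g h : (Fin n → ZMod 2) → ZMod 2} (he : ∀ y, g y = h y)
    (hh : RepQ F h) : RepQ F g := by
  obtain ⟨c, c₀, γ, h1, h2, h3⟩ := hh
  exact ⟨c, c₀, γ, h1, h2, fun y => (he y).trans (h3 y)⟩

private lemma RepQ_const' (γ : ZMod 2) : RepQ F (fun _ => γ) := by
  refine ⟨0, 0, γ, by simp, by simp, fun y => ?_⟩
  simp [Qv]

private lemma RepQ_lin' (b : Fin n → ZMod 2) (hb : ∀ k, b k ≠ 0 → k ∈ F) :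
    RepQ F (fun y => ∑ k, b k * y k) := by
  refine ⟨0, b, 0, by simp, hb, fun y => ?_⟩
  simp [Qv]

private lemma RepQ_add' {g h : (Fin n → ZMod 2) → ZMod 2} (hg : RepQ F g) (hh : RepQ F h) :
    RepQ F (fun y => g y + h y) := by
  obtain ⟨c, c₀, γ, h1, h2, h3⟩ := hg
  obtain ⟨c', c₀', γ', h1', h2', h3'⟩ := hh
  refine ⟨c + c', c₀ + c₀', γ + γ', ?_, ?_, fun y => ?_⟩
  · intro j k hjk
    by_cases h : c j k ≠ 0
    · exact h1 j k h
    · push_neg at h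
      exact h1' j k (by simpa [Pi.add_apply, h] using hjk)
  · intro j hj
    by_cases h : c₀ j ≠ 0
    · exact h2 j h
    · push_neg at h
      exact h2' j (by simpa [Pi.add_apply, h] using hj)
  · show g y + h y = _
    rw [h3 y, h3' y]
    simp only [Qv, Pi.add_apply, add_mul, Finset.sum_add_distrib]
    ring

private lemma RepQ_sum' {ι : Type*} (s : Finset ι) (G : ι → (Fin n → ZMod 2) → ZMod 2) :
    (∀ i ∈ s, RepQ F (G i)) → RepQ F (fun y => ∑ i ∈ s, G i y) := by
  classical
  refine Finset.induction_on s ?_ ?_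
  · exact fun _ => RepQ_congr' (by simp) (RepQ_const' 0)
  · intro a s' hni ih h
    exact RepQ_congr' (fun y => Finset.sum_insert hni)
      (RepQ_add' (h a (Finset.mem_insert_self a s'))
        (ih (fun i hi => h i (Finset.mem_insert_of_mem hi))))

private lemma RepQ_mono_lt (a b : Fin n) (hab : a < b) (ha : a ∈ F) (hb : b ∈ F) :
    RepQ F (fun y => y a * y b) := by
  classical
  refine ⟨fun j k => if j = a ∧ k = b then 1 else 0, 0, 0, ?_, by simp, fun y => ?_⟩
  · intro j k hjk
    by_cases h : j = a ∧ k = b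
    · exact h.1 ▸ h.2 ▸ ⟨ha, hb⟩
    · simp [h] at hjk
  · simp only [Qv, Pi.zero_apply, zero_mul, Finset.sum_const_zero, add_zero]
    rw [Finset.sum_eq_single a]
    · rw [Finset.sum_eq_single b]
      · simp
      · intro k hk hkb
        simp [hkb]
      · intro hbmem
        exact absurd (Finset.mem_filter.mpr ⟨Finset.mem_univ b, hab⟩) hbmem
    · intro j _ hja
      apply Finset.sum_eq_zero
      intro k _
      simp [hja]
    · intro h; exact absurd (Finset.mem_univ a) h

private lemma RepQ_mono (t : ZMod 2) (a b : Fin n) (h : t ≠ 0 → a ∈ F ∧ b ∈ F) :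
    RepQ F (fun y => t * (y a * y b)) := by
  classical
  rcases zmod2_cases' t with ht | ht
  · subst ht
    exact RepQ_congr' (fun y => by rw [zero_mul]) (RepQ_const' 0)
  · subst ht
    obtain ⟨ha, hb⟩ := h one_ne_zero
    have hone : ∀ y : Fin n → ZMod 2, (1 : ZMod 2) * (y a * y b) = y a * y b :=
      fun y => one_mul _
    rcases lt_trichotomy a b with hab | hab | hab
    · exact RepQ_congr' hone (RepQ_mono_lt a b hab ha hb)
    · subst hab
      refine RepQ_congr' (fun y => ?_) (RepQ_lin' (fun k => if k = a then 1 else 0)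
        (fun k hk => by by_cases h' : k = a <;> simp [h'] at hk ⊢; exact h' ▸ ha))
      rw [hone, zmod2_mul_self]
      simp
    · exact RepQ_congr' (fun y => by rw [hone, mul_comm]) (RepQ_mono_lt b a hab hb ha)

private lemma RepQ_affine_mul (t a₁ a₂ : ZMod 2) (b₁ b₂ : Fin n → ZMod 2)
    (h1 : ∀ k, b₁ k ≠ 0 → k ∈ F) (h2 : ∀ k, b₂ k ≠ 0 → k ∈ F) :
    RepQ F (fun y => t * ((a₁ + ∑ k, b₁ k * y k) * (a₂ + ∑ k, b₂ k * y k))) := by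
  have key : ∀ y : Fin n → ZMod 2,
      t * ((a₁ + ∑ k, b₁ k * y k) * (a₂ + ∑ k, b₂ k * y k))
      = (t * a₁ * a₂)
        + ((∑ k, (t * a₂ * b₁ k) * y k)
        + ((∑ k, (t * a₁ * b₂ k) * y k)
        + (∑ k, ∑ l, (t * b₁ k * b₂ l) * (y k * y l)))) := by
    intro y
    have e1 : ∑ k, (t * a₂ * b₁ k) * y k = t * a₂ * ∑ k, b₁ k * y k := by
      rw [Finset.mul_sum]; exact Finset.sum_congr rfl fun k _ => by ring
    have e2 : ∑ k, (t * a₁ * b₂ k) * y k = t * a₁ * ∑ k, b₂ k * y k := by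
      rw [Finset.mul_sum]; exact Finset.sum_congr rfl fun k _ => by ring
    have e3 : ∑ k, ∑ l, (t * b₁ k * b₂ l) * (y k * y l)
        = t * ((∑ k, b₁ k * y k) * (∑ l, b₂ l * y l)) := by
      rw [Finset.sum_mul_sum, Finset.mul_sum]
      refine Finset.sum_congr rfl fun k _ => ?_
      rw [Finset.mul_sum]
      exact Finset.sum_congr rfl fun l _ => by ring
    rw [e1, e2, e3]; ring
  refine RepQ_congr' key ?_
  refine RepQ_add' (RepQ_const' _) (RepQ_add' (RepQ_lin' _ ?_) (RepQ_add' (RepQ_lin' _ ?_) ?_))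
  · intro k hk; exact h1 k (fun h0 => hk (by rw [h0, mul_zero]))
  · intro k hk; exact h2 k (fun h0 => hk (by rw [h0, mul_zero]))
  · refine RepQ_sum' Finset.univ _ fun k _ => RepQ_sum' Finset.univ _ fun l _ => ?_
    exact RepQ_mono _ k l (fun hne =>
      ⟨h1 k (fun h0 => hne (by rw [h0, mul_zero, zero_mul])),
       h2 l (fun h0 => hne (by rw [h0, mul_zero]))⟩)

end RepQLemmas

theorem phase_poly_free_vars_only {n : ℕ} (A : Set (Fin n → ZMod 2))
    [DecidablePred (· ∈ A)]
    (hA : IsAffineSubspace A) (F : Finset (Fin n)) (hF : IsFreeSet A F)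
    (d : Fin n → ZMod 2) (c : Fin n → Fin n → ZMod 2) (c₀ : Fin n → ZMod 2)
    (ψ : (Fin n → ZMod 2) → ℂ)
    (hψ : ∀ y, ψ y = if y ∈ A then
        I ^ (∑ j, d j * y j).val *
        (-1 : ℂ) ^ (∑ j, ∑ k ∈ Finset.univ.filter (fun k => j < k), c j k * y j * y k
            + ∑ j, c₀ j * y j).val
      else 0) :
    ∃ (d' : Fin n → ZMod 2) (c' : Fin n → Fin n → ZMod 2) (c₀' : Fin n → ZMod 2)
      (lam : ℂ), lam ≠ 0 ∧
      (∀ j, d' j ≠ 0 → j ∈ F) ∧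
      (∀ j k, c' j k ≠ 0 → j ∈ F ∧ k ∈ F) ∧
      (∀ j, c₀' j ≠ 0 → j ∈ F) ∧
      ∀ y, ψ y = lam * (if y ∈ A then
          I ^ (∑ j, d' j * y j).val *
          (-1 : ℂ) ^ (∑ j, ∑ k ∈ Finset.univ.filter (fun k => j < k), c' j k * y j * y k
              + ∑ j, c₀' j * y j).val
        else 0) := by
  classical
  choose a b hbF hcoef using fun j => coord_affine hA hF j
  set d' : Fin n → ZMod 2 := fun k => ∑ j, d j * b j k with hd'def
  set α : ZMod 2 := ∑ j, d j * a j with hαdef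
  have hd'F : ∀ k, d' k ≠ 0 → k ∈ F := by
    intro k hk
    by_contra hkF
    apply hk
    simp only [hd'def]
    refine Finset.sum_eq_zero fun j _ => ?_
    by_cases hbjk : b j k = 0
    · rw [hbjk, mul_zero]
    · exact absurd (hbF j k hbjk) hkF
  have hlin : ∀ y ∈ A, ∑ j, d j * y j = α + ∑ j, d' j * y j := by
    intro y hy
    have step1 : ∑ j, d j * y j = ∑ j, (d j * a j + ∑ k, d j * (b j k * y k)) := by
      refine Finset.sum_congr rfl fun j _ => ?_
      rw [hcoef j y hy, mul_add, Finset.mul_sum]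
    rw [step1, Finset.sum_add_distrib]
    congr 1
    rw [Finset.sum_comm]
    refine Finset.sum_congr rfl fun k _ => ?_
    simp only [hd'def]
    rw [Finset.sum_mul]
    exact Finset.sum_congr rfl fun j _ => by ring
  -- the big substituted quadratic function
  have hG : RepQ F (fun y =>
      (∑ j, ∑ k ∈ Finset.univ.filter (fun k => j < k),
          c j k * ((a j + ∑ m, b j m * y m) * (a k + ∑ m, b k m * y m)))
      + ((∑ j, c₀ j * ((a j + ∑ m, b j m * y m) * (1 + ∑ m, (0 : Fin n → ZMod 2) m * y m)))
      + (α * ((0 + ∑ m, d' m * y m) * (1 + ∑ m, (0 : Fin n → ZMod 2) m * y m))))) := by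
    refine RepQ_add' (RepQ_sum' Finset.univ _ fun j _ => RepQ_sum' _ _ fun k _ =>
        RepQ_affine_mul (c j k) (a j) (a k) (b j) (b k) (hbF j) (hbF k))
      (RepQ_add' (RepQ_sum' Finset.univ _ fun j _ =>
        RepQ_affine_mul (c₀ j) (a j) 1 (b j) 0 (hbF j) (by simp))
        (RepQ_affine_mul α 0 1 d' 0 hd'F (by simp)))
  obtain ⟨c', c₀', γ, hc'F, hc₀'F, hQv⟩ := hG
  simp only [Qv] at hQv
  have hGval : ∀ y ∈ A,
      (∑ j, ∑ k ∈ Finset.univ.filter (fun k => j < k), c j k * y j * y k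
          + ∑ j, c₀ j * y j) + α * (∑ j, d' j * y j)
      = (∑ j, ∑ k ∈ Finset.univ.filter (fun k => j < k), c' j k * y j * y k
          + ∑ j, c₀' j * y j) + γ := by
    intro y hy
    have hsub : ∀ j, a j + ∑ m, b j m * y m = y j := fun j => (hcoef j y hy).symm
    have := hQv y
    simp only [Pi.zero_apply, zero_mul, Finset.sum_const_zero, add_zero, mul_one,
      zero_add, hsub] at this
    rw [← this]
    simp only [← mul_assoc]
    ring
  refine ⟨d', c', c₀', I ^ α.val * (-1:ℂ) ^ γ.val,
    mul_ne_zero (pow_ne_zero _ I_ne_zero) (pow_ne_zero _ (by norm_num)),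
    hd'F, hc'F, hc₀'F, fun y => ?_⟩
  rw [hψ y]
  by_cases hy : y ∈ A
  · rw [if_pos hy, if_pos hy, hlin y hy, I_val_add, mul_assoc, mul_assoc,
      ← neg_one_val_add]
    have e5 : α * (∑ j, d' j * y j)
        + (∑ j, ∑ k ∈ Finset.univ.filter (fun k => j < k), c j k * y j * y k
            + ∑ j, c₀ j * y j)
        = (∑ j, ∑ k ∈ Finset.univ.filter (fun k => j < k), c' j k * y j * y k
            + ∑ j, c₀' j * y j) + γ := by
      rw [add_comm]; exact hGval y hy
    rw [e5, neg_one_val_add]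
    ring
  · rw [if_neg hy, if_neg hy, mul_zero]
end

section
/- Let A ⊆ 𝔽₂ⁿ be an affine subspace with set of free variables F, and let ψ = λ Σ_{x∈A} i^{l(x)}(−1)^{q(x)}|x⟩ and φ = μ Σ_{x∈A} i^{l′(x)}(−1)^{q′(x)}|x⟩ with λ, μ ≠ 0, where l, l′ are linear forms and q, q′ quadratic forms over 𝔽₂ depending only on coordinates in F. Then ψ and φ are linearly dependent if and only if all coefficients agree: d_j = d_j′, c_j = c_j′, and c_{jk} = c_{jk}′ for all j, k ∈ F. -/
open Complex

lemma zmod2_phase_inj (a b a' b' : ZMod 2)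
    (h : (I:ℂ) ^ a.val * (-1 : ℂ) ^ b.val = I ^ a'.val * (-1 : ℂ) ^ b'.val) :
    a = a' ∧ b = b' := by
  have key : ∀ x : ZMod 2, x = 0 ∨ x = 1 := by decide
  rcases key a with rfl | rfl <;> rcases key b with rfl | rfl <;> rcases key a' with rfl | rfl <;>
    rcases key b' with rfl | rfl <;>
    simp_all [show ZMod.val (1 : ZMod 2) = 1 from rfl, Complex.ext_iff] <;> norm_num at h

section sums
variable {n : ℕ} (F : Finset (Fin n))

lemma lin_single (e x : Fin n → ZMod 2) {j : Fin n} (hj : j ∈ F)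
    (hx : ∀ a ∈ F, x a = if a = j then 1 else 0) :
    ∑ a ∈ F, e a * x a = e j := by
  have h : ∀ a ∈ F, e a * x a = if a = j then e a else 0 := by
    intro a ha; rw [hx a ha]; split_ifs <;> simp
  rw [Finset.sum_congr rfl h, Finset.sum_ite_eq' F j, if_pos hj]

lemma quad_single (cc : Fin n → Fin n → ZMod 2) (x : Fin n → ZMod 2) {j : Fin n}
    (hx : ∀ a ∈ F, x a = if a = j then 1 else 0) :
    ∑ a ∈ F, ∑ b ∈ F.filter (fun b => a < b), cc a b * x a * x b = 0 := by
  apply Finset.sum_eq_zero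
  intro a ha
  apply Finset.sum_eq_zero
  intro b hb
  obtain ⟨hbF, hab⟩ := Finset.mem_filter.mp hb
  rw [hx a ha, hx b hbF]
  by_cases h : a = j
  · have hbj : b ≠ j := by rintro rfl; rw [h] at hab; exact lt_irrefl _ hab
    simp [hbj]
  · simp [h]

lemma lin_pair (e x : Fin n → ZMod 2) {j k : Fin n} (hj : j ∈ F) (hk : k ∈ F) (hjk : j ≠ k)
    (hx : ∀ a ∈ F, x a = if a = j ∨ a = k then 1 else 0) :
    ∑ a ∈ F, e a * x a = e j + e k := by
  have h : ∀ a ∈ F, e a * x a =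
      (if a = j then e a else 0) + (if a = k then e a else 0) := by
    intro a ha; rw [hx a ha]
    rcases eq_or_ne a j with rfl | h1 <;> rcases eq_or_ne a k with rfl | h2 <;>
      simp_all
  rw [Finset.sum_congr rfl h, Finset.sum_add_distrib, Finset.sum_ite_eq' F j,
    Finset.sum_ite_eq' F k, if_pos hj, if_pos hk]

lemma quad_pair (cc : Fin n → Fin n → ZMod 2) (x : Fin n → ZMod 2) {j k : Fin n}
    (hj : j ∈ F) (hk : k ∈ F) (hjk : j < k)
    (hx : ∀ a ∈ F, x a = if a = j ∨ a = k then 1 else 0) :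
    ∑ a ∈ F, ∑ b ∈ F.filter (fun b => a < b), cc a b * x a * x b = cc j k := by
  rw [Finset.sum_eq_single j]
  · rw [Finset.sum_eq_single k]
    · rw [hx j hj, hx k hk]; simp
    · intro b hb hbk
      obtain ⟨hbF, hjb⟩ := Finset.mem_filter.mp hb
      have : ¬ (b = j ∨ b = k) := by
        rintro (rfl | rfl)
        · exact absurd hjb (lt_irrefl _)
        · exact hbk rfl
      rw [hx b hbF]; simp [this]
    · intro hk'
      exact absurd (Finset.mem_filter.mpr ⟨hk, hjk⟩) hk'
  · intro a ha haj
    apply Finset.sum_eq_zero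
    intro b hb
    obtain ⟨hbF, hab⟩ := Finset.mem_filter.mp hb
    by_cases hak : a = k
    · subst hak
      have : ¬ (b = j ∨ b = a) := by
        rintro (rfl | rfl)
        · exact absurd (hjk.trans hab) (lt_irrefl _)
        · exact absurd hab (lt_irrefl _)
      rw [hx b hbF]; simp [this]
    · have : ¬ (a = j ∨ a = k) := by rintro (rfl | rfl) <;> simp_all
      rw [hx a ha]; simp [this]
  · intro hj'
    exact absurd hj hj'

end sums

theorem phase_poly_linear_dependence_iff {n : ℕ} (A : Set (Fin n → ZMod 2))
    [DecidablePred (· ∈ A)]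
    (hA : IsAffineSubspace A) (F : Finset (Fin n)) (hF : IsFreeSet A F)
    (d d' : Fin n → ZMod 2) (c c' : Fin n → Fin n → ZMod 2) (c₀ c₀' : Fin n → ZMod 2)
    (lam mu : ℂ) (hlam : lam ≠ 0) (hmu : mu ≠ 0)
    (ψ φ : (Fin n → ZMod 2) → ℂ)
    (hψ : ∀ y, ψ y = lam * (if y ∈ A then
        I ^ (∑ j ∈ F, d j * y j).val *
        (-1 : ℂ) ^ (∑ j ∈ F, ∑ k ∈ F.filter (fun k => j < k), c j k * y j * y k
            + ∑ j ∈ F, c₀ j * y j).val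
      else 0))
    (hφ : ∀ y, φ y = mu * (if y ∈ A then
        I ^ (∑ j ∈ F, d' j * y j).val *
        (-1 : ℂ) ^ (∑ j ∈ F, ∑ k ∈ F.filter (fun k => j < k), c' j k * y j * y k
            + ∑ j ∈ F, c₀' j * y j).val
      else 0)) :
    (∃ z : ℂ, z ≠ 0 ∧ ψ = z • φ) ↔
      ((∀ j ∈ F, d j = d' j) ∧ (∀ j ∈ F, c₀ j = c₀' j) ∧
        (∀ j ∈ F, ∀ k ∈ F, j < k → c j k = c' j k)) := by
  constructor
  · rintro ⟨z, hz, hzf⟩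
    have hpt : ∀ u : {k // k ∈ F} → ZMod 2, ∃ x ∈ A, ∀ j, (hj : j ∈ F) → x j = u ⟨j, hj⟩ := by
      intro u
      obtain ⟨x, hxA, hxu⟩ := hF.surjOn (Set.mem_univ u)
      exact ⟨x, hxA, fun j hj => congrFun hxu ⟨j, hj⟩⟩
    have key : ∀ x ∈ A,
        lam * (I ^ (∑ j ∈ F, d j * x j).val *
          (-1 : ℂ) ^ (∑ j ∈ F, ∑ k ∈ F.filter (fun k => j < k), c j k * x j * x k
              + ∑ j ∈ F, c₀ j * x j).val)
        = (z * mu) * (I ^ (∑ j ∈ F, d' j * x j).val *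
          (-1 : ℂ) ^ (∑ j ∈ F, ∑ k ∈ F.filter (fun k => j < k), c' j k * x j * x k
              + ∑ j ∈ F, c₀' j * x j).val) := by
      intro x hx
      have h := congrFun hzf x
      simp only [Pi.smul_apply, smul_eq_mul] at h
      rw [hψ x, hφ x, if_pos hx, if_pos hx] at h
      rw [h]; ring
    -- evaluate at the all-zero point
    obtain ⟨x₀, hx₀A, hx₀⟩ := hpt 0
    have hx₀' : ∀ a ∈ F, x₀ a = 0 := fun a ha => by rw [hx₀ a ha]; rfl
    have hlz : lam = z * mu := by
      have h := key x₀ hx₀A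
      have h1 : ∀ e : Fin n → ZMod 2, ∑ a ∈ F, e a * x₀ a = 0 :=
        fun e => Finset.sum_eq_zero fun a ha => by rw [hx₀' a ha, mul_zero]
      have h2 : ∀ cc : Fin n → Fin n → ZMod 2,
          ∑ a ∈ F, ∑ b ∈ F.filter (fun b => a < b), cc a b * x₀ a * x₀ b = 0 :=
        fun cc => Finset.sum_eq_zero fun a ha => Finset.sum_eq_zero fun b hb => by
          rw [hx₀' a ha, mul_zero, zero_mul]
      rw [h1 d, h1 d', h1 c₀, h1 c₀', h2 c, h2 c'] at h
      simpa using h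
    have hzmu : z * mu ≠ 0 := hlz ▸ hlam
    have main : ∀ x ∈ A,
        I ^ (∑ j ∈ F, d j * x j).val *
          (-1 : ℂ) ^ (∑ j ∈ F, ∑ k ∈ F.filter (fun k => j < k), c j k * x j * x k
              + ∑ j ∈ F, c₀ j * x j).val
        = I ^ (∑ j ∈ F, d' j * x j).val *
          (-1 : ℂ) ^ (∑ j ∈ F, ∑ k ∈ F.filter (fun k => j < k), c' j k * x j * x k
              + ∑ j ∈ F, c₀' j * x j).val := by
      intro x hx
      have k' := key x hx
      rw [← hlz] at k'
      exact mul_left_cancel₀ hlam k'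
    -- single points
    have single : ∀ j ∈ F, d j = d' j ∧ c₀ j = c₀' j := by
      intro j hj
      obtain ⟨x, hxA, hxu⟩ := hpt (fun a => if a.1 = j then 1 else 0)
      have hx' : ∀ a ∈ F, x a = if a = j then 1 else 0 := fun a ha => hxu a ha
      have h := main x hxA
      rw [lin_single F d x hj hx', lin_single F d' x hj hx',
        lin_single F c₀ x hj hx', lin_single F c₀' x hj hx',
        quad_single F c x hx', quad_single F c' x hx', zero_add, zero_add] at h
      exact zmod2_phase_inj _ _ _ _ h
    refine ⟨fun j hj => (single j hj).1, fun j hj => (single j hj).2, ?_⟩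
    intro j hj k hk hjk
    obtain ⟨x, hxA, hxu⟩ := hpt (fun a => if a.1 = j ∨ a.1 = k then 1 else 0)
    have hx' : ∀ a ∈ F, x a = if a = j ∨ a = k then 1 else 0 := fun a ha => hxu a ha
    have h := main x hxA
    rw [lin_pair F d x hj hk hjk.ne hx', lin_pair F d' x hj hk hjk.ne hx',
      lin_pair F c₀ x hj hk hjk.ne hx', lin_pair F c₀' x hj hk hjk.ne hx',
      quad_pair F c x hj hk hjk hx', quad_pair F c' x hj hk hjk hx',
      ← (single j hj).1, ← (single k hk).1, ← (single j hj).2, ← (single k hk).2] at h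
    have := (zmod2_phase_inj _ _ _ _ h).2
    exact add_right_cancel this
  · rintro ⟨hd, hc0, hc⟩
    refine ⟨lam / mu, div_ne_zero hlam hmu, funext fun y => ?_⟩
    rw [Pi.smul_apply, smul_eq_mul, hψ y, hφ y]
    by_cases hy : y ∈ A
    · rw [if_pos hy, if_pos hy]
      have h1 : ∑ j ∈ F, d j * y j = ∑ j ∈ F, d' j * y j :=
        Finset.sum_congr rfl fun j hj => by rw [hd j hj]
      have h2 : ∑ j ∈ F, ∑ k ∈ F.filter (fun k => j < k), c j k * y j * y k
          = ∑ j ∈ F, ∑ k ∈ F.filter (fun k => j < k), c' j k * y j * y k :=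
        Finset.sum_congr rfl fun j hj => Finset.sum_congr rfl fun k hk => by
          obtain ⟨hkF, hjk⟩ := Finset.mem_filter.mp hk
          rw [hc j hj k hkF hjk]
      have h3 : ∑ j ∈ F, c₀ j * y j = ∑ j ∈ F, c₀' j * y j :=
        Finset.sum_congr rfl fun j hj => by rw [hc0 j hj]
      rw [h1, h2, h3]
      field_simp
    · rw [if_neg hy, if_neg hy]
      simp
end

section
/- Given an n-qubit state ψ of the form ψ = λ Σ_{x∈A} i^{l(x)}(−1)^{q(x)}|x⟩ (λ ≠ 0, A affine, l linear, q quadratic over 𝔽₂, both depending only on a set F of free variables), there exist unique coefficients r_j ∈ ℤ₄ (j ∈ F) and s_{jk} ∈ ℤ₂ (j<k ∈ F) and a nonzero scalar μ such that ψ = μ Σ_{x∈A} i^{p(x)}|x⟩, where p(x) = Σ_{j∈F} r_j x_j + 2 Σ_{j<k∈F} s_{jk} x_j x_k is evaluated modulo 4. -/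
open Complex

lemma Ipow_mod4 (m : ℕ) : (I:ℂ)^m = I^((m : ZMod 4).val) := by
  rw [ZMod.val_natCast]
  conv_lhs => rw [← Nat.div_add_mod m 4]
  rw [pow_add, pow_mul, I_pow_four, one_pow, one_mul]

lemma negpow_mod2 (m : ℕ) : ((-1:ℂ))^m = (-1)^((m : ZMod 2).val) := by
  rw [ZMod.val_natCast]
  conv_lhs => rw [← Nat.div_add_mod m 2]
  rw [pow_add, pow_mul, neg_one_sq, one_pow, one_mul]

lemma zmod2_cases (a : ZMod 2) : a = 0 ∨ a = 1 := by revert a; decide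

lemma two2' : (2 : ZMod 2) = 0 := by decide

lemma Ipow_add2 (a b : ZMod 2) :
    (I:ℂ)^(a.val + b.val) = I^((a+b).val) * (-1:ℂ)^((a*b).val) := by
  rcases zmod2_cases a with ha | ha <;> rcases zmod2_cases b with hb | hb <;>
    subst ha <;> subst hb <;> norm_num [I_sq, show ZMod.val (2:ZMod 2) = 0 by decide, show ZMod.val (1:ZMod 2) = 1 by decide]

lemma negpow_add2 (a b : ZMod 2) :
    ((-1:ℂ))^((a+b).val) = (-1:ℂ)^a.val * (-1:ℂ)^b.val := by
  rcases zmod2_cases a with ha | ha <;> rcases zmod2_cases b with hb | hb <;>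
    subst ha <;> subst hb <;> norm_num [show ZMod.val (2:ZMod 2) = 0 by decide, show ZMod.val (1:ZMod 2) = 1 by decide]

lemma val_mul2 (a b : ZMod 2) : (a*b).val = a.val * b.val := by revert a b; decide

lemma natCast_val2 (a : ZMod 2) : ((a.val : ℕ) : ZMod 2) = a := by revert a; decide

lemma natCast_val4 (a : ZMod 4) : ((a.val : ℕ) : ZMod 4) = a := by revert a; decide

lemma Ipow_inj4 (a b : ZMod 4) (h : (I:ℂ)^a.val = I^b.val) : a = b := by
  have h4 : ∀ x : ZMod 4, x = 0 ∨ x = 1 ∨ x = 2 ∨ x = 3 := by decide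
  rcases h4 a with ha|ha|ha|ha <;> rcases h4 b with hb|hb|hb|hb <;> subst ha <;> subst hb <;>
    first
      | rfl
      | (exfalso; revert h;
         simp only [show ((0:ZMod 4)).val = 0 from rfl, show ((1:ZMod 4)).val = 1 from rfl,
           show ((2:ZMod 4)).val = 2 from rfl, show ((3:ZMod 4)).val = 3 from rfl,
           pow_succ, pow_zero, one_mul, Complex.ext_iff];
         norm_num)

lemma two_smul_inj2 (a b : ZMod 2) (h : 2*((a.val:ℕ) : ZMod 4) = 2*((b.val:ℕ) : ZMod 4)) : a = b := by
  revert h; revert a b; decide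

lemma key_pairs {n : ℕ} (t : Fin n → ZMod 2) (F : Finset (Fin n)) :
    (I:ℂ) ^ (∑ j ∈ F, (t j).val) =
    I ^ ((∑ j ∈ F, t j).val) *
    (-1:ℂ) ^ ((∑ j ∈ F, ∑ k ∈ F.filter (fun k => j < k), t j * t k).val) := by
  induction F using Finset.induction_on_max with
  | empty => simp
  | insert a s ha ih =>
    have has : a ∉ s := fun h => lt_irrefl a (ha a h)
    have hfa : (insert a s).filter (fun k => a < k) = ∅ := by
      apply Finset.filter_eq_empty_iff.2
      intro x hx
      rcases Finset.mem_insert.1 hx with rfl | hx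
      · exact lt_irrefl x
      · exact fun h => absurd (ha x hx) (lt_asymm h)
    have hfj : ∀ j ∈ s, (insert a s).filter (fun k => j < k)
        = insert a (s.filter (fun k => j < k)) := by
      intro j hj
      rw [Finset.filter_insert, if_pos (ha j hj)]
    have hnotmem : ∀ j ∈ s, a ∉ s.filter (fun k => j < k) := by
      intro j hj h
      exact has (Finset.mem_of_mem_filter a h)
    have hpair : (∑ j ∈ insert a s, ∑ k ∈ (insert a s).filter (fun k => j < k), t j * t k)
        = (∑ j ∈ s, ∑ k ∈ s.filter (fun k => j < k), t j * t k) + t a * ∑ j ∈ s, t j := by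
      rw [Finset.sum_insert has, hfa, Finset.sum_empty, zero_add,
        Finset.sum_congr rfl (fun j hj => by rw [hfj j hj, Finset.sum_insert (hnotmem j hj)]),
        Finset.sum_add_distrib, ← Finset.sum_mul, add_comm, mul_comm]
    have hE := Ipow_add2 (t a) (∑ j ∈ s, t j)
    rw [Finset.sum_insert has, Finset.sum_insert has, hpair, pow_add, ih,
      negpow_add2 (∑ j ∈ s, ∑ k ∈ s.filter (fun k => j < k), t j * t k) (t a * ∑ j ∈ s, t j)]
    linear_combination ((-1:ℂ) ^ (∑ j ∈ s, ∑ k ∈ s.filter (fun k => j < k), t j * t k).val) * hE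

lemma rval (a b : ZMod 2) :
    ((((a.val:ℕ):ZMod 4) + 2*((b.val:ℕ):ZMod 4)).val) = a.val + 2*b.val := by
  revert a b; decide

lemma main_eq {n : ℕ} (F : Finset (Fin n)) (d c₀ : Fin n → ZMod 2)
    (c : Fin n → Fin n → ZMod 2) (r : Fin n → ZMod 4) (s : Fin n → Fin n → ZMod 2)
    (hr : ∀ j ∈ F, r j = (((d j).val : ℕ) : ZMod 4) + 2*(((c₀ j).val : ℕ) : ZMod 4))
    (hr0 : ∀ j, j ∉ F → r j = 0)
    (hs : ∀ j ∈ F, ∀ k ∈ F, j < k → s j k = c j k + d j * d k)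
    (hs0 : ∀ j k, ¬(j ∈ F ∧ k ∈ F ∧ j < k) → s j k = 0)
    (y : Fin n → ZMod 2) :
    I ^ (∑ j ∈ F, d j * y j).val *
      (-1 : ℂ) ^ (∑ j ∈ F, ∑ k ∈ F.filter (fun k => j < k), c j k * y j * y k
          + ∑ j ∈ F, c₀ j * y j).val
    = I ^ (∑ j, (r j).val * (y j).val
          + 2 * ∑ j, ∑ k ∈ Finset.univ.filter (fun k => j < k),
              (s j k).val * (y j).val * (y k).val) := by
  set S1 : ℕ := ∑ j ∈ F, (d j).val * (y j).val with hS1def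
  set S2 : ℕ := ∑ j ∈ F, (c₀ j).val * (y j).val with hS2def
  set S3 : ℕ := ∑ j ∈ F, ∑ k ∈ F.filter (fun k => j < k),
      (c j k + d j * d k).val * (y j).val * (y k).val with hS3def
  have hA : (∑ j, (r j).val * (y j).val) = S1 + 2 * S2 := by
    rw [hS1def, hS2def, ← Finset.sum_subset F.subset_univ
      (fun x _ hx => by rw [hr0 x hx]; simp)]
    rw [Finset.sum_congr rfl (fun j hj => by rw [hr j hj, rval])]
    simp only [add_mul, mul_assoc]
    rw [Finset.sum_add_distrib, ← Finset.mul_sum]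
  have hB : (∑ j, ∑ k ∈ Finset.univ.filter (fun k => j < k),
      (s j k).val * (y j).val * (y k).val) = S3 := by
    rw [hS3def, ← Finset.sum_subset F.subset_univ (fun x _ hx => by
      apply Finset.sum_eq_zero
      intro k _
      rw [hs0 x k (fun h => hx h.1)]
      simp)]
    apply Finset.sum_congr rfl
    intro j hj
    rw [← Finset.sum_subset (Finset.filter_subset_filter _ F.subset_univ)
      (fun k hk hk2 => by
        rw [hs0 j k (fun h => hk2 (Finset.mem_filter.2 ⟨h.2.1, (Finset.mem_filter.1 hk).2⟩))]
        simp)]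
    apply Finset.sum_congr rfl
    intro k hk
    rw [hs j hj k (Finset.mem_filter.1 hk).1 (Finset.mem_filter.1 hk).2]
  rw [hA, hB, show S1 + 2*S2 + 2*S3 = S1 + 2*(S2+S3) from by ring, pow_add, pow_mul, I_sq,
    pow_add]
  have h1 : (I:ℂ)^S1 = I ^ ((∑ j ∈ F, d j * y j).val) *
      (-1:ℂ) ^ ((∑ j ∈ F, ∑ k ∈ F.filter (fun k => j < k), (d j * y j) * (d k * y k)).val) := by
    rw [hS1def, Finset.sum_congr rfl (fun j _ => (val_mul2 (d j) (y j)).symm)]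
    exact key_pairs (fun j => d j * y j) F
  have h2 : ((-1:ℂ))^S2 = (-1:ℂ) ^ ((∑ j ∈ F, c₀ j * y j).val) := by
    have hc : ((S2 : ℕ) : ZMod 2) = ∑ j ∈ F, c₀ j * y j := by
      rw [hS2def]
      push_cast [natCast_val2]
      rfl
    rw [negpow_mod2, hc]
  have h3 : ((-1:ℂ))^S3 = (-1:ℂ) ^ ((∑ j ∈ F, ∑ k ∈ F.filter (fun k => j < k), c j k * y j * y k).val)
      * (-1:ℂ) ^ ((∑ j ∈ F, ∑ k ∈ F.filter (fun k => j < k), (d j * y j) * (d k * y k)).val) := by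
    rw [negpow_mod2]
    have hc : ((S3 : ℕ) : ZMod 2) = (∑ j ∈ F, ∑ k ∈ F.filter (fun k => j < k), c j k * y j * y k)
        + (∑ j ∈ F, ∑ k ∈ F.filter (fun k => j < k), (d j * y j) * (d k * y k)) := by
      rw [hS3def]
      push_cast [natCast_val2]
      rw [← Finset.sum_add_distrib]
      apply Finset.sum_congr rfl
      intro j _
      rw [← Finset.sum_add_distrib]
      apply Finset.sum_congr rfl
      intro k _
      ring
    rw [hc, negpow_add2]
  rw [h1, h2, h3, negpow_add2]
  have hsq : ((-1:ℂ)) ^ ((∑ j ∈ F, ∑ k ∈ F.filter (fun k => j < k), (d j * y j) * (d k * y k)).val)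
      * (-1:ℂ) ^ ((∑ j ∈ F, ∑ k ∈ F.filter (fun k => j < k), (d j * y j) * (d k * y k)).val) = 1 := by
    rw [← pow_add, ← two_mul, pow_mul, neg_one_sq, one_pow]
  linear_combination (-(I ^ ((∑ j ∈ F, d j * y j).val) *
    (-1:ℂ) ^ ((∑ j ∈ F, ∑ k ∈ F.filter (fun k => j < k), c j k * y j * y k).val) *
    (-1:ℂ) ^ ((∑ j ∈ F, c₀ j * y j).val))) * hsq

lemma val_one2 : (1 : ZMod 2).val = 1 := rfl

lemma eval_restrict {n : ℕ} (F : Finset (Fin n)) (r : Fin n → ZMod 4) (s : Fin n → Fin n → ZMod 2)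
    (hr0 : ∀ j, r j ≠ 0 → j ∈ F) (hs0 : ∀ j k, s j k ≠ 0 → j ∈ F ∧ k ∈ F ∧ j < k)
    (x : Fin n → ZMod 2) :
    (∑ j, (r j).val * (x j).val
      + 2 * ∑ j, ∑ k ∈ Finset.univ.filter (fun k => j < k), (s j k).val * (x j).val * (x k).val)
    = ∑ j ∈ F, (r j).val * (x j).val
      + 2 * ∑ j ∈ F, ∑ k ∈ F.filter (fun k => j < k), (s j k).val * (x j).val * (x k).val := by
  have hlin : (∑ j, (r j).val * (x j).val) = ∑ j ∈ F, (r j).val * (x j).val :=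
    (Finset.sum_subset F.subset_univ (fun j _ hj => by
      have h : r j = 0 := by by_contra h; exact hj (hr0 j h)
      rw [h]; simp)).symm
  have hquad : (∑ j, ∑ k ∈ Finset.univ.filter (fun k => j < k),
        (s j k).val * (x j).val * (x k).val)
      = ∑ j ∈ F, ∑ k ∈ F.filter (fun k => j < k), (s j k).val * (x j).val * (x k).val := by
    rw [← Finset.sum_subset F.subset_univ (fun j _ hj => Finset.sum_eq_zero (fun k _ => by
      have h : s j k = 0 := by by_contra h; exact hj (hs0 j k h).1
      rw [h]; simp))]
    refine Finset.sum_congr rfl (fun j hj => ?_)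
    refine (Finset.sum_subset (Finset.filter_subset_filter _ F.subset_univ)
      (fun k hk hk2 => ?_)).symm
    have h : s j k = 0 := by
      by_contra h
      exact hk2 (Finset.mem_filter.2 ⟨(hs0 j k h).2.1, (Finset.mem_filter.1 hk).2⟩)
    rw [h]; simp
  rw [hlin, hquad]

lemma eval_zero {n : ℕ} (F : Finset (Fin n)) (r : Fin n → ZMod 4) (s : Fin n → Fin n → ZMod 2)
    (hr0 : ∀ j, r j ≠ 0 → j ∈ F) (hs0 : ∀ j k, s j k ≠ 0 → j ∈ F ∧ k ∈ F ∧ j < k)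
    (x : Fin n → ZMod 2) (hx : ∀ k ∈ F, x k = 0) :
    (∑ j, (r j).val * (x j).val
      + 2 * ∑ j, ∑ k ∈ Finset.univ.filter (fun k => j < k), (s j k).val * (x j).val * (x k).val)
    = 0 := by
  rw [eval_restrict F r s hr0 hs0 x,
    Finset.sum_eq_zero (fun j hj => by rw [hx j hj]; simp),
    Finset.sum_eq_zero (fun j hj => Finset.sum_eq_zero (fun k _ => by rw [hx j hj]; simp))]
  simp

lemma eval_single {n : ℕ} (F : Finset (Fin n)) (r : Fin n → ZMod 4) (s : Fin n → Fin n → ZMod 2)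
    (hr0 : ∀ j, r j ≠ 0 → j ∈ F) (hs0 : ∀ j k, s j k ≠ 0 → j ∈ F ∧ k ∈ F ∧ j < k)
    (j : Fin n) (hj : j ∈ F)
    (x : Fin n → ZMod 2) (hx : ∀ k ∈ F, x k = if k = j then 1 else 0) :
    (∑ m, (r m).val * (x m).val
      + 2 * ∑ m, ∑ k ∈ Finset.univ.filter (fun k => m < k), (s m k).val * (x m).val * (x k).val)
    = (r j).val := by
  rw [eval_restrict F r s hr0 hs0 x]
  have h1 : (∑ m ∈ F, (r m).val * (x m).val) = (r j).val := by
    rw [Finset.sum_eq_single_of_mem j hj (fun m hm hmj => by rw [hx m hm, if_neg hmj]; simp),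
      hx j hj, if_pos rfl, val_one2, mul_one]
  have h2 : (∑ m ∈ F, ∑ k ∈ F.filter (fun k => m < k),
      (s m k).val * (x m).val * (x k).val) = 0 := by
    refine Finset.sum_eq_zero (fun m hm => Finset.sum_eq_zero (fun k hk => ?_))
    by_cases hmj : m = j
    · subst hmj
      have hkF := Finset.mem_filter.1 hk
      rw [hx k hkF.1, if_neg hkF.2.ne']
      simp
    · rw [hx m hm, if_neg hmj]; simp
  rw [h1, h2]; simp

lemma eval_pair {n : ℕ} (F : Finset (Fin n)) (r : Fin n → ZMod 4) (s : Fin n → Fin n → ZMod 2)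
    (hr0 : ∀ j, r j ≠ 0 → j ∈ F) (hs0 : ∀ j k, s j k ≠ 0 → j ∈ F ∧ k ∈ F ∧ j < k)
    (j k : Fin n) (hj : j ∈ F) (hk : k ∈ F) (hjk : j < k)
    (x : Fin n → ZMod 2) (hx : ∀ m ∈ F, x m = if m = j ∨ m = k then 1 else 0) :
    (∑ m, (r m).val * (x m).val
      + 2 * ∑ m, ∑ l ∈ Finset.univ.filter (fun l => m < l), (s m l).val * (x m).val * (x l).val)
    = (r j).val + (r k).val + 2 * (s j k).val := by
  rw [eval_restrict F r s hr0 hs0 x]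
  have hsub : ({j, k} : Finset (Fin n)) ⊆ F := by
    intro m hm
    rcases Finset.mem_insert.1 hm with rfl | hm
    · exact hj
    · rw [Finset.mem_singleton.1 hm]; exact hk
  have hvan : ∀ m ∈ F, m ∉ ({j, k} : Finset (Fin n)) → x m = 0 := by
    intro m hm hm2
    rw [hx m hm, if_neg]
    intro h
    exact hm2 (by rcases h with rfl | rfl <;> simp)
  have h1 : (∑ m ∈ F, (r m).val * (x m).val) = (r j).val + (r k).val := by
    rw [← Finset.sum_subset hsub (fun m hm hm2 => by rw [hvan m hm hm2]; simp),
      Finset.sum_pair hjk.ne, hx j hj, if_pos (Or.inl rfl), hx k hk, if_pos (Or.inr rfl),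
      val_one2, mul_one, mul_one]
  have h2 : (∑ m ∈ F, ∑ l ∈ F.filter (fun l => m < l),
      (s m l).val * (x m).val * (x l).val) = (s j k).val := by
    rw [← Finset.sum_subset hsub (fun m hm hm2 => Finset.sum_eq_zero (fun l _ => by
      rw [hvan m hm hm2]; simp)), Finset.sum_pair hjk.ne]
    have hinj : (∑ l ∈ F.filter (fun l => j < l), (s j l).val * (x j).val * (x l).val)
        = (s j k).val := by
      rw [Finset.sum_eq_single_of_mem k (Finset.mem_filter.2 ⟨hk, hjk⟩) (fun l hl hlk => by
        have hlF := Finset.mem_filter.1 hl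
        rw [hvan l hlF.1 (by
          simp only [Finset.mem_insert, Finset.mem_singleton]
          push_neg
          exact ⟨hlF.2.ne', hlk⟩)]
        simp), hx j hj, if_pos (Or.inl rfl), hx k hk, if_pos (Or.inr rfl), val_one2,
        mul_one, mul_one]
    have hink : (∑ l ∈ F.filter (fun l => k < l), (s k l).val * (x k).val * (x l).val) = 0 := by
      refine Finset.sum_eq_zero (fun l hl => ?_)
      have hlF := Finset.mem_filter.1 hl
      rw [hvan l hlF.1 (by
        simp only [Finset.mem_insert, Finset.mem_singleton]
        push_neg
        exact ⟨(hjk.trans hlF.2).ne', hlF.2.ne'⟩)]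
      simp
    rw [hinj, hink, add_zero]
  rw [h1, h2]


theorem true_phase_polynomial_unique {n : ℕ} (A : Set (Fin n → ZMod 2))
    [DecidablePred (· ∈ A)]
    (hA : IsAffineSubspace A) (F : Finset (Fin n)) (hF : IsFreeSet A F)
    (d : Fin n → ZMod 2) (c : Fin n → Fin n → ZMod 2) (c₀ : Fin n → ZMod 2)
    (lam : ℂ) (hlam : lam ≠ 0)
    (ψ : (Fin n → ZMod 2) → ℂ)
    (hψ : ∀ y, ψ y = lam * (if y ∈ A then
        I ^ (∑ j ∈ F, d j * y j).val *
        (-1 : ℂ) ^ (∑ j ∈ F, ∑ k ∈ F.filter (fun k => j < k), c j k * y j * y k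
            + ∑ j ∈ F, c₀ j * y j).val
      else 0)) :
    ∃! rs : (Fin n → ZMod 4) × (Fin n → Fin n → ZMod 2),
      (∀ j, rs.1 j ≠ 0 → j ∈ F) ∧
      (∀ j k, rs.2 j k ≠ 0 → j ∈ F ∧ k ∈ F ∧ j < k) ∧
      ∃ mu : ℂ, mu ≠ 0 ∧ ∀ y, ψ y = mu * (if y ∈ A then
          I ^ (∑ j, (rs.1 j).val * (y j).val
              + 2 * ∑ j, ∑ k ∈ Finset.univ.filter (fun k => j < k),
                  (rs.2 j k).val * (y j).val * (y k).val)
        else 0) := by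
  classical
  set r : Fin n → ZMod 4 := fun j => if j ∈ F then
      (((d j).val : ℕ) : ZMod 4) + 2*(((c₀ j).val : ℕ) : ZMod 4) else 0 with hrdef
  set s : Fin n → Fin n → ZMod 2 := fun j k => if j ∈ F ∧ k ∈ F ∧ j < k then
      c j k + d j * d k else 0 with hsdef
  have hrsupp : ∀ j, r j ≠ 0 → j ∈ F := by
    intro j h
    by_contra hj
    exact h (if_neg hj)
  have hssupp : ∀ j k, s j k ≠ 0 → j ∈ F ∧ k ∈ F ∧ j < k := by
    intro j k h
    by_contra hj
    exact h (if_neg hj)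
  have hmain : ∀ y, ψ y = lam * (if y ∈ A then
      I ^ (∑ j, (r j).val * (y j).val
          + 2 * ∑ j, ∑ k ∈ Finset.univ.filter (fun k => j < k),
              (s j k).val * (y j).val * (y k).val)
    else 0) := by
    intro y
    rw [hψ y]
    congr 1
    by_cases hy : y ∈ A
    · rw [if_pos hy, if_pos hy]
      exact main_eq F d c₀ c r s (fun j hj => if_pos hj) (fun j hj => if_neg hj)
        (fun j hj k hk hjk => if_pos ⟨hj, hk, hjk⟩) (fun j k h => if_neg h) y
    · rw [if_neg hy, if_neg hy]
  refine ⟨(r, s), ⟨hrsupp, hssupp, lam, hlam, hmain⟩, ?_⟩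
  rintro ⟨r', s'⟩ ⟨hr', hs', mu, hmu, heq⟩
  -- pick representatives in A with prescribed free coordinates
  have hpick : ∀ z : {k // k ∈ F} → ZMod 2, ∃ x ∈ A, ∀ k (hk : k ∈ F), x k = z ⟨k, hk⟩ := by
    intro z
    obtain ⟨x, hxA, hfx⟩ := hF.2.2 (Set.mem_univ z)
    exact ⟨x, hxA, fun k hk => congrFun hfx ⟨k, hk⟩⟩
  have hcomp : ∀ x ∈ A,
      mu * I ^ (∑ j, (r' j).val * (x j).val
          + 2 * ∑ j, ∑ k ∈ Finset.univ.filter (fun k => j < k),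
              (s' j k).val * (x j).val * (x k).val)
      = lam * I ^ (∑ j, (r j).val * (x j).val
          + 2 * ∑ j, ∑ k ∈ Finset.univ.filter (fun k => j < k),
              (s j k).val * (x j).val * (x k).val) := by
    intro x hx
    have h1 := heq x
    have h2 := hmain x
    rw [if_pos hx] at h1 h2
    rw [← h1, ← h2]
  -- mu = lam
  have hmulam : mu = lam := by
    obtain ⟨x, hxA, hxv⟩ := hpick (fun _ => 0)
    have := hcomp x hxA
    rw [eval_zero F r s hrsupp hssupp x (fun k hk => hxv k hk),
      eval_zero F r' s' hr' hs' x (fun k hk => hxv k hk)] at this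
    simpa using this
  -- r' = r
  have hreq : r' = r := by
    funext j
    by_cases hj : j ∈ F
    · obtain ⟨x, hxA, hxv⟩ := hpick (fun m => if m.1 = j then 1 else 0)
      have hxv' : ∀ k ∈ F, x k = if k = j then 1 else 0 := fun k hk => hxv k hk
      have h := hcomp x hxA
      rw [eval_single F r s hrsupp hssupp j hj x hxv',
        eval_single F r' s' hr' hs' j hj x hxv', hmulam] at h
      exact Ipow_inj4 _ _ (mul_left_cancel₀ hlam h)
    · have h1 : r' j = 0 := by
        by_contra h
        exact hj (hr' j h)
      rw [h1, hrdef]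
      exact (if_neg hj).symm
  -- s' = s
  have hseq : s' = s := by
    funext j k
    by_cases hjk : j ∈ F ∧ k ∈ F ∧ j < k
    · obtain ⟨hj, hk, hlt⟩ := hjk
      obtain ⟨x, hxA, hxv⟩ := hpick (fun m => if m.1 = j ∨ m.1 = k then 1 else 0)
      have hxv' : ∀ m ∈ F, x m = if m = j ∨ m = k then 1 else 0 := fun m hm => hxv m hm
      have h := hcomp x hxA
      rw [eval_pair F r s hrsupp hssupp j k hj hk hlt x hxv',
        eval_pair F r' s' hr' hs' j k hj hk hlt x hxv', hmulam] at h
      have h2 := mul_left_cancel₀ hlam h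
      rw [Ipow_mod4 ((r' j).val + (r' k).val + 2 * (s' j k).val),
        Ipow_mod4 ((r j).val + (r k).val + 2 * (s j k).val)] at h2
      have h3 := Ipow_inj4 _ _ h2
      push_cast [natCast_val4] at h3
      rw [hreq] at h3
      have h4 : 2*(((s' j k).val : ℕ) : ZMod 4) = 2*(((s j k).val : ℕ) : ZMod 4) := by
        linear_combination h3
      exact two_smul_inj2 _ _ h4
    · have h1 : s' j k = 0 := by
        by_contra h
        exact hjk (hs' j k h)
      rw [h1, hsdef]
      exact (if_neg hjk).symm
  rw [hreq, hseq]
end
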